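/- Define R(n) = 2 ∫_{0}^{1} (3x² - 2x³)ⁿ dx for nonnegative integers n. Then for every nonnegative integer n, 9(n+1)(2n+1)·R(n) - 2(3n+4)(3n+2)·R(n+1) = 2. -/

import Mathlib

open intervalIntegral in
lemma ruehr_key (n : ℕ) :
    ∫ x in (0:ℝ)..(1:ℝ),
      (9 * ((n:ℝ) + 1) * (2 * (n:ℝ) + 1) * (3 * x ^ 2 - 2 * x ^ 3) ^ n
        - 2 * (3 * (n:ℝ) + 4) * (3 * (n:ℝ) + 2) * (3 * x ^ 2 - 2 * x ^ 3) ^ (n + 1)) = 1 := by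
  have h : ∀ x ∈ Set.uIcc (0:ℝ) 1,
      HasDerivAt (fun y : ℝ =>
          ((9*(n:ℝ)+9)*y + 3*(n:ℝ)*y^2 - (24*(n:ℝ)+16)*y^3 + (12*(n:ℝ)+8)*y^4)
            * (3 * y ^ 2 - 2 * y ^ 3) ^ n)
        (9 * ((n:ℝ) + 1) * (2 * (n:ℝ) + 1) * (3 * x ^ 2 - 2 * x ^ 3) ^ n
          - 2 * (3 * (n:ℝ) + 4) * (3 * (n:ℝ) + 2) * (3 * x ^ 2 - 2 * x ^ 3) ^ (n + 1)) x := by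
    intro x _
    have hf : HasDerivAt (fun y : ℝ => 3 * y ^ 2 - 2 * y ^ 3) (6*x - 6*x^2) x := by
      have := ((hasDerivAt_pow 2 x).const_mul (3:ℝ)).sub ((hasDerivAt_pow 3 x).const_mul (2:ℝ))
      refine this.congr_deriv ?_
      push_cast; ring
    have hfn := hf.pow n
    have hC : HasDerivAt (fun y : ℝ =>
        (9*(n:ℝ)+9)*y + 3*(n:ℝ)*y^2 - (24*(n:ℝ)+16)*y^3 + (12*(n:ℝ)+8)*y^4)
        ((9*(n:ℝ)+9) + 6*(n:ℝ)*x - (72*(n:ℝ)+48)*x^2 + (48*(n:ℝ)+32)*x^3) x := by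
      refine (((((hasDerivAt_id x).const_mul ((9:ℝ)*(n:ℝ)+9)).add ((hasDerivAt_pow 2 x).const_mul (3*(n:ℝ)))).sub ((hasDerivAt_pow 3 x).const_mul (24*(n:ℝ)+16))).add ((hasDerivAt_pow 4 x).const_mul (12*(n:ℝ)+8))).congr_deriv ?_
      push_cast; ring
    have hmul := hC.mul hfn
    refine hmul.congr_deriv ?_
    obtain _ | m := n
    · norm_num
      ring
    · have h1 : (m + 1 : ℕ) - 1 = m := rfl
      rw [h1]
      simp only [Pi.pow_apply]
      push_cast
      rw [pow_succ, pow_succ, pow_succ]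
      ring
  have hint : IntervalIntegrable (fun x : ℝ =>
      9 * ((n:ℝ) + 1) * (2 * (n:ℝ) + 1) * (3 * x ^ 2 - 2 * x ^ 3) ^ n
        - 2 * (3 * (n:ℝ) + 4) * (3 * (n:ℝ) + 2) * (3 * x ^ 2 - 2 * x ^ 3) ^ (n + 1))
      MeasureTheory.volume 0 1 := by
    apply Continuous.intervalIntegrable
    fun_prop
  rw [integral_eq_sub_of_hasDerivAt h hint]
  norm_num
  ring

theorem ruehr_R_recurrence (R : ℕ → ℝ)
    (hR : ∀ n : ℕ, R n = 2 * ∫ x in (0 : ℝ)..(1 : ℝ), (3 * x ^ 2 - 2 * x ^ 3) ^ n) :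
    ∀ n : ℕ, 9 * ((n : ℝ) + 1) * (2 * (n : ℝ) + 1) * R n
      - 2 * (3 * (n : ℝ) + 4) * (3 * (n : ℝ) + 2) * R (n + 1) = 2 := by
  intro n
  have i1 : IntervalIntegrable (fun x : ℝ => (3 * x ^ 2 - 2 * x ^ 3) ^ n)
      MeasureTheory.volume 0 1 := by apply Continuous.intervalIntegrable; fun_prop
  have i2 : IntervalIntegrable (fun x : ℝ => (3 * x ^ 2 - 2 * x ^ 3) ^ (n + 1))
      MeasureTheory.volume 0 1 := by apply Continuous.intervalIntegrable; fun_prop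
  have key := ruehr_key n
  rw [hR n, hR (n + 1)]
  rw [show (∫ x in (0:ℝ)..(1:ℝ),
      (9 * ((n:ℝ) + 1) * (2 * (n:ℝ) + 1) * (3 * x ^ 2 - 2 * x ^ 3) ^ n
        - 2 * (3 * (n:ℝ) + 4) * (3 * (n:ℝ) + 2) * (3 * x ^ 2 - 2 * x ^ 3) ^ (n + 1)))
      = 9 * ((n:ℝ) + 1) * (2 * (n:ℝ) + 1) * (∫ x in (0:ℝ)..(1:ℝ), (3 * x ^ 2 - 2 * x ^ 3) ^ n)
        - 2 * (3 * (n:ℝ) + 4) * (3 * (n:ℝ) + 2) *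
          (∫ x in (0:ℝ)..(1:ℝ), (3 * x ^ 2 - 2 * x ^ 3) ^ (n + 1)) from by
    rw [intervalIntegral.integral_sub (i1.const_mul _) (i2.const_mul _),
      intervalIntegral.integral_const_mul, intervalIntegral.integral_const_mul]] at key
  linarith [key]
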